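/- Let k ≥ 1 and consider on an interval [a,b] the interpolation operator π into polynomials of degree ≤ k defined by (πv)(a) = v(a), (πv)(b) = v(b), and ∫ₐᵇ (x-a)^l·(πv)(x) dx = ∫ₐᵇ (x-a)^l·v(x) dx for l = 1,…,k-1. Then π is well-defined (these k+1 conditions determine πv uniquely) and πv = v for every polynomial v of degree ≤ k. -/

import Mathlib

open MeasureTheory Real Polynomial

private lemma intable (a b : ℝ) (l : ℕ) (p : Polynomial ℝ) :
    IntervalIntegrable (fun x => (x - a) ^ l * p.eval x) volume a b :=
  (((continuous_id.sub continuous_const).pow l).mul (Polynomial.continuous p)).intervalIntegrable a b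

private lemma homog (a b : ℝ) (hab : a < b) (k : ℕ) (p : Polynomial ℝ)
    (hdeg : p.natDegree ≤ k) (ha : p.eval a = 0) (hb : p.eval b = 0)
    (hm : ∀ l : ℕ, 1 ≤ l → l ≤ k - 1 →
      (∫ x in a..b, (x - a) ^ l * p.eval x) = 0) : p = 0 := by
  obtain ⟨p₁, hp₁⟩ : (X - C a) ∣ p := dvd_iff_isRoot.2 ha
  have hb1 : p₁.eval b = 0 := by
    have h := hb
    rw [hp₁, eval_mul, eval_sub, eval_X, eval_C] at h
    rcases mul_eq_zero.1 h with h' | h'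
    · exfalso; linarith
    · exact h'
  obtain ⟨r, hrr⟩ : (X - C b) ∣ p₁ := dvd_iff_isRoot.2 hb1
  rw [hrr] at hp₁
  rcases eq_or_ne r 0 with h0 | hrne
  · rw [hp₁, h0, mul_zero, mul_zero]
  exfalso
  have hXa : (X - C a : Polynomial ℝ) ≠ 0 := X_sub_C_ne_zero a
  have hXb : (X - C b : Polynomial ℝ) ≠ 0 := X_sub_C_ne_zero b
  have hdp : p.natDegree = 2 + r.natDegree := by
    rw [hp₁, natDegree_mul hXa (mul_ne_zero hXb hrne), natDegree_mul hXb hrne,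
      natDegree_X_sub_C, natDegree_X_sub_C]
    omega
  have hk2 : r.natDegree + 2 ≤ k := by omega
  set s : Polynomial ℝ := (X - C a) * r with hs_def
  have hsd : s.natDegree = 1 + r.natDegree := by
    rw [hs_def, natDegree_mul hXa hrne, natDegree_X_sub_C]
  set c : ℕ → ℝ := fun i => ((Polynomial.taylor a s).coeff i) with hc_def
  have hs_sum : s = ∑ i ∈ Finset.range k, C (c i) * (X - C a) ^ i := by
    conv_lhs => rw [← Polynomial.sum_taylor_eq s a]
    exact Polynomial.sum_over_range' _ (fun n => by simp) k (by rw [natDegree_taylor]; omega)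
  have hc0 : c 0 = 0 := by
    rw [hc_def]
    simp [Polynomial.taylor_coeff_zero, hs_def]
  have hkey : (∫ x in a..b, s.eval x * p.eval x) = 0 := by
    have h1 : ∀ x : ℝ, s.eval x * p.eval x
        = ∑ i ∈ Finset.range k, c i * ((x - a) ^ i * p.eval x) := by
      intro x
      conv_lhs => rw [hs_sum]
      rw [eval_finset_sum, Finset.sum_mul]
      refine Finset.sum_congr rfl fun i _ => ?_
      simp only [eval_mul, eval_pow, eval_sub, eval_X, eval_C]
      ring
    rw [intervalIntegral.integral_congr
      (g := fun x => ∑ i ∈ Finset.range k, c i * ((x - a) ^ i * p.eval x)) (fun x _ => h1 x)]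
    rw [intervalIntegral.integral_finset_sum (fun i _ => (intable a b i p).const_mul (c i))]
    refine Finset.sum_eq_zero fun i hi => ?_
    rw [intervalIntegral.integral_const_mul]
    rcases Nat.eq_zero_or_pos i with h | h
    · rw [h, hc0, zero_mul]
    · rw [hm i h (by simp only [Finset.mem_range] at hi; omega), mul_zero]
  have hg0 : (∫ x in a..b, (x - a) ^ 2 * (b - x) * r.eval x ^ 2) = 0 := by
    have heq : ∀ x : ℝ, (x - a) ^ 2 * (b - x) * r.eval x ^ 2 = -(s.eval x * p.eval x) := by
      intro x
      rw [hp₁, hs_def]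
      simp only [eval_mul, eval_sub, eval_X, eval_C]
      ring
    rw [intervalIntegral.integral_congr (g := fun x => -(s.eval x * p.eval x)) (fun x _ => heq x),
      intervalIntegral.integral_neg, hkey, neg_zero]
  set g : ℝ → ℝ := fun x => (x - a) ^ 2 * (b - x) * r.eval x ^ 2 with hg_def
  have hgc : Continuous g := by
    apply Continuous.mul
    · exact (((continuous_id.sub continuous_const).pow 2).mul
        ((continuous_const.sub continuous_id)))
    · exact (Polynomial.continuous r).pow 2
  have hgi : IntegrableOn g (Set.Ioc a b) volume := (hgc.intervalIntegrable a b).1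
  have h0' : ∫ x in Set.Ioc a b, g x = 0 := by
    rw [← intervalIntegral.integral_of_le hab.le]; exact hg0
  have hnn : 0 ≤ᵐ[volume.restrict (Set.Ioc a b)] g := by
    refine (ae_restrict_iff' measurableSet_Ioc).2 (Filter.Eventually.of_forall fun x hx => ?_)
    have hb' : 0 ≤ b - x := by linarith [hx.2]
    exact mul_nonneg (mul_nonneg (sq_nonneg _) hb') (sq_nonneg _)
  have hae : g =ᵐ[volume.restrict (Set.Ioc a b)] 0 :=
    (MeasureTheory.integral_eq_zero_iff_of_nonneg_ae hnn hgi).1 h0'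
  have hnull : volume ({x | g x ≠ 0} ∩ Set.Ioc a b) = 0 := by
    have h2 : (volume.restrict (Set.Ioc a b)) {x | g x ≠ 0} = 0 := by
      have := MeasureTheory.ae_iff.1 hae
      simpa using this
    rw [Measure.restrict_apply' measurableSet_Ioc] at h2
    exact h2
  set G : Polynomial ℝ := (X - C a) ^ 2 * (C b - X) * r ^ 2 with hG_def
  have hGne : G ≠ 0 := by
    refine mul_ne_zero (mul_ne_zero (pow_ne_zero _ hXa) ?_) (pow_ne_zero _ hrne)
    intro h
    apply hXb
    have hcb : (X - C b : Polynomial ℝ) = -(C b - X) := by ring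
    rw [hcb, h, neg_zero]
  have hGg : ∀ x, G.eval x = g x := by
    intro x
    rw [hG_def, hg_def]
    simp only [eval_mul, eval_pow, eval_sub, eval_X, eval_C]
  have hfin : Set.Finite {x | G.IsRoot x} := Polynomial.finite_setOf_isRoot hGne
  have hsub : Set.Ioc a b ⊆ ({x | g x ≠ 0} ∩ Set.Ioc a b) ∪ {x | G.IsRoot x} := by
    intro x hx
    by_cases h : g x = 0
    · exact Or.inr (by simp only [Set.mem_setOf_eq, IsRoot, hGg x, h])
    · exact Or.inl ⟨h, hx⟩
  have hzero : volume (Set.Ioc a b) = 0 := by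
    refine le_antisymm ?_ zero_le
    calc volume (Set.Ioc a b) ≤ _ := measure_mono hsub
      _ ≤ volume ({x | g x ≠ 0} ∩ Set.Ioc a b) + volume {x | G.IsRoot x} := measure_union_le _ _
      _ = 0 := by rw [hnull, hfin.measure_zero, add_zero]
  rw [Real.volume_Ioc] at hzero
  have hpos := ENNReal.ofReal_pos.2 (sub_pos.2 hab)
  rw [hzero] at hpos
  exact lt_irrefl 0 hpos

private lemma uniq (a b : ℝ) (hab : a < b) (k : ℕ) (p q : Polynomial ℝ)
    (hp : p.natDegree ≤ k) (hq : q.natDegree ≤ k)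
    (hea : p.eval a = q.eval a) (heb : p.eval b = q.eval b)
    (hmom : ∀ l : ℕ, 1 ≤ l → l ≤ k - 1 →
      (∫ x in a..b, (x - a) ^ l * p.eval x) = ∫ x in a..b, (x - a) ^ l * q.eval x) :
    p = q := by
  have h := homog a b hab k (p - q) (le_trans (natDegree_sub_le p q) (max_le hp hq))
    (by rw [eval_sub, hea, sub_self]) (by rw [eval_sub, heb, sub_self])
    (fun l h1 h2 => by
      have heq : (fun x : ℝ => (x - a) ^ l * (p - q).eval x)
          = fun x => (x - a) ^ l * p.eval x - (x - a) ^ l * q.eval x := by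
        funext x; rw [eval_sub]; ring
      rw [heq, intervalIntegral.integral_sub (intable a b l p) (intable a b l q),
        hmom l h1 h2, sub_self])
  exact sub_eq_zero.1 h

private noncomputable def momL (a b : ℝ) (l : ℕ) : Polynomial ℝ →ₗ[ℝ] ℝ where
  toFun p := ∫ x in a..b, (x - a) ^ l * p.eval x
  map_add' p q := by
    have heq : (fun x : ℝ => (x - a) ^ l * (p + q).eval x)
        = fun x => (x - a) ^ l * p.eval x + (x - a) ^ l * q.eval x := by
      funext x; rw [eval_add]; ring
    simp only [heq]
    exact intervalIntegral.integral_add (intable a b l p) (intable a b l q)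
  map_smul' m p := by
    have heq : (fun x : ℝ => (x - a) ^ l * (m • p).eval x)
        = fun x => m * ((x - a) ^ l * p.eval x) := by
      funext x; rw [Polynomial.eval_smul, smul_eq_mul]; ring
    simp only [heq, intervalIntegral.integral_const_mul, RingHom.id_apply, smul_eq_mul]

private noncomputable def dataMap (a b : ℝ) (k : ℕ) : Polynomial ℝ →ₗ[ℝ] (Fin (k + 1) → ℝ) :=
  LinearMap.pi (fun i => if i.val = 0 then Polynomial.leval a
    else if i.val = 1 then Polynomial.leval b else momL a b (i.val - 1))

private lemma deg_of_mem {k : ℕ} {p : Polynomial ℝ} (h : p ∈ Polynomial.degreeLT ℝ (k + 1)) :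
    p.natDegree ≤ k := by
  have hd := Polynomial.mem_degreeLT.1 h
  rcases eq_or_ne p 0 with h0 | h0
  · simp [h0]
  · rw [Polynomial.degree_eq_natDegree h0] at hd
    exact_mod_cast Nat.lt_succ_iff.1 (by exact_mod_cast hd)

theorem stmt14 (a b : ℝ) (hab : a < b) (k : ℕ) (hk : 1 ≤ k) :
    (∀ v : ℝ → ℝ, ContinuousOn v (Set.Icc a b) →
      ∃! p : Polynomial ℝ, p.natDegree ≤ k ∧ p.eval a = v a ∧ p.eval b = v b ∧
        ∀ l : ℕ, 1 ≤ l → l ≤ k - 1 →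
          (∫ x in a..b, (x - a) ^ l * p.eval x) = ∫ x in a..b, (x - a) ^ l * v x) ∧
    ∀ q : Polynomial ℝ, q.natDegree ≤ k →
      ∀ p : Polynomial ℝ,
        (p.natDegree ≤ k ∧ p.eval a = q.eval a ∧ p.eval b = q.eval b ∧
          ∀ l : ℕ, 1 ≤ l → l ≤ k - 1 →
            (∫ x in a..b, (x - a) ^ l * p.eval x) = ∫ x in a..b, (x - a) ^ l * q.eval x) →
        p = q := by
  have key : ∀ w : Fin (k + 1) → ℝ, ∃ p : Polynomial ℝ, p.natDegree ≤ k ∧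
      dataMap a b k p = w := by
    set M := (dataMap a b k).comp (Polynomial.degreeLT ℝ (k + 1)).subtype with hM
    have hMinj : Function.Injective M := by
      rw [← LinearMap.ker_eq_bot, LinearMap.ker_eq_bot']
      intro q hq
      have hqd : (q : Polynomial ℝ).natDegree ≤ k := deg_of_mem q.2
      have hqa : Polynomial.eval a (q : Polynomial ℝ) = 0 := by
        have h := congrFun (congrArg (fun f => (f : Fin (k+1) → ℝ)) hq) (⟨0, by omega⟩ : Fin (k+1))
        simpa [hM, dataMap, Polynomial.leval_apply] using h
      have hqb : Polynomial.eval b (q : Polynomial ℝ) = 0 := by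
        have h := congrFun (congrArg (fun f => (f : Fin (k+1) → ℝ)) hq) (⟨1, by omega⟩ : Fin (k+1))
        simpa [hM, dataMap, Polynomial.leval_apply] using h
      have hqm : ∀ l : ℕ, 1 ≤ l → l ≤ k - 1 →
          (∫ x in a..b, (x - a) ^ l * Polynomial.eval x (q : Polynomial ℝ)) = 0 := by
        intro l h1 h2
        have h := congrFun (congrArg (fun f => (f : Fin (k+1) → ℝ)) hq)
          (⟨l + 1, by omega⟩ : Fin (k+1))
        simp only [hM, LinearMap.comp_apply, Submodule.coe_subtype, dataMap,
          LinearMap.pi_apply, Pi.zero_apply] at h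
        rw [if_neg (by omega), if_neg (by omega)] at h
        simpa [momL] using h
      exact Subtype.ext (homog a b hab k _ hqd hqa hqb hqm)
    have hE : Function.Surjective
        (M.comp ((Polynomial.degreeLTEquiv ℝ (k + 1)).symm : (Fin (k+1) → ℝ) →ₗ[ℝ] _)) := by
      rw [← LinearMap.injective_iff_surjective, LinearMap.coe_comp]
      exact hMinj.comp (Polynomial.degreeLTEquiv ℝ (k + 1)).symm.injective
    intro w
    obtain ⟨u, hu⟩ := hE w
    exact ⟨((Polynomial.degreeLTEquiv ℝ (k + 1)).symm u : _),
      deg_of_mem ((Polynomial.degreeLTEquiv ℝ (k + 1)).symm u).2, hu⟩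
  constructor
  · intro v hv
    obtain ⟨p, hpd, hpw⟩ := key (fun i => if i.val = 0 then v a else if i.val = 1 then v b
      else ∫ x in a..b, (x - a) ^ (i.val - 1) * v x)
    have hpa : p.eval a = v a := by
      have h := congrFun hpw (⟨0, by omega⟩ : Fin (k+1))
      simpa [dataMap, Polynomial.leval_apply] using h
    have hpb : p.eval b = v b := by
      have h := congrFun hpw (⟨1, by omega⟩ : Fin (k+1))
      simpa [dataMap, Polynomial.leval_apply] using h
    have hpm : ∀ l : ℕ, 1 ≤ l → l ≤ k - 1 →
        (∫ x in a..b, (x - a) ^ l * p.eval x) = ∫ x in a..b, (x - a) ^ l * v x := by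
      intro l h1 h2
      have h := congrFun hpw (⟨l + 1, by omega⟩ : Fin (k+1))
      simp only [dataMap, LinearMap.pi_apply] at h
      rw [if_neg (by omega), if_neg (by omega), if_neg (by omega), if_neg (by omega)] at h
      simpa [momL] using h
    refine ⟨p, ⟨hpd, hpa, hpb, hpm⟩, fun y hy => ?_⟩
    exact uniq a b hab k y p hy.1 hpd (hy.2.1.trans hpa.symm) (hy.2.2.1.trans hpb.symm)
      (fun l h1 h2 => (hy.2.2.2 l h1 h2).trans (hpm l h1 h2).symm)
  · intro q hq p hp
    exact uniq a b hab k p q hp.1 hq hp.2.1 hp.2.2.1 hp.2.2.2
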